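/- Let A(n1,n2) be the normalized Fourier coefficients of a Hecke–Maass cusp form for SL(3,Z), satisfying the Hecke relation A(n1,n2) = Σ_{d | gcd(n1,n2)} μ(d) A(n1/d,1) A(1,n2/d). Assume the Ramanujan bound on average Σ_{n ≤ X} |A(1,n)|² ≪_ε X^{1+ε} for all X ≥ 1. Then for any N ≥ 1, ε > 0, and any n1 ≥ 1, one has Σ_{n2 ≤ N/n1²} |A(n1,n2)|² ≪_ε (N^{1+ε}/n1²) · Σ_{d | n1} |A(n1/d,1)|²/d. -/

import Mathlib

open Finset ArithmeticFunction

/-- Divisor bound: for every `δ > 0` there is `C ≥ 1` with `τ(n) ≤ C n^δ`. -/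
lemma divisor_bound (δ : ℝ) (hδ : 0 < δ) :
    ∃ C : ℝ, 1 ≤ C ∧ ∀ n : ℕ, n ≠ 0 → (n.divisors.card : ℝ) ≤ C * (n : ℝ) ^ δ := by
  have hlog2 : 0 < Real.log 2 := Real.log_pos (by norm_num)
  set B : ℝ := max 1 (1 / (δ * Real.log 2)) with hBdef
  have hB1 : (1 : ℝ) ≤ B := le_max_left _ _
  have hB0 : (0 : ℝ) ≤ B := by linarith
  have hpos : 0 < δ * Real.log 2 := by positivity
  have hBδ : 1 ≤ B * (δ * Real.log 2) := by
    calc (1:ℝ) = (1 / (δ * Real.log 2)) * (δ * Real.log 2) := by field_simp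
    _ ≤ B * (δ * Real.log 2) :=
      mul_le_mul_of_nonneg_right (le_max_right _ _) hpos.le
  set P : ℕ := ⌈(2:ℝ) ^ (1/δ)⌉₊ with hPdef
  have hC1 : (1:ℝ) ≤ B ^ (P + 1) := by
    calc (1:ℝ) = 1 ^ (P+1) := (one_pow _).symm
    _ ≤ B ^ (P+1) := pow_le_pow_left₀ (by norm_num) hB1 _
  refine ⟨B ^ (P + 1), hC1, ?_⟩
  intro n hn
  rw [Nat.card_divisors hn]
  have key : ∀ p ∈ n.primeFactors,
      ((n.factorization p : ℝ) + 1) ≤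
        (if (p:ℝ) < (2:ℝ) ^ (1/δ) then B else 1) *
          ((p : ℝ) ^ (n.factorization p)) ^ δ := by
    intro p hp
    have hpp : p.Prime := Nat.prime_of_mem_primeFactors hp
    have hp2 : (2:ℝ) ≤ (p:ℝ) := by exact_mod_cast hpp.two_le
    have hp0 : (0:ℝ) ≤ (p:ℝ) := by linarith
    set k := n.factorization p with hk
    have hk0 : (0:ℝ) ≤ (k:ℝ) := Nat.cast_nonneg _
    have hrw : ((p:ℝ) ^ k) ^ δ = ((p:ℝ) ^ δ) ^ k := by
      rw [← Real.rpow_natCast (p:ℝ) k, ← Real.rpow_natCast ((p:ℝ) ^ δ) k,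
        ← Real.rpow_mul hp0, ← Real.rpow_mul hp0, mul_comm]
    rw [hrw]
    by_cases hsmall : (p:ℝ) < (2:ℝ) ^ (1/δ)
    · rw [if_pos hsmall]
      have h2δ : (2:ℝ) ^ (δ * (k:ℝ)) ≤ ((p:ℝ) ^ δ) ^ k := by
        rw [← Real.rpow_natCast ((p:ℝ) ^ δ) k, ← Real.rpow_mul hp0]
        exact Real.rpow_le_rpow (by norm_num) hp2 (by positivity)
      have hexp : Real.log 2 * (δ * (k:ℝ)) + 1 ≤ (2:ℝ) ^ (δ * (k:ℝ)) := by
        rw [Real.rpow_def_of_pos (by norm_num : (0:ℝ) < 2)]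
        exact Real.add_one_le_exp _
      have h1 : ((k:ℝ) + 1) ≤ B * (Real.log 2 * (δ * (k:ℝ)) + 1) := by
        nlinarith [mul_le_mul_of_nonneg_right hBδ hk0]
      calc ((k:ℝ) + 1) ≤ B * (Real.log 2 * (δ * (k:ℝ)) + 1) := h1
        _ ≤ B * ((2:ℝ) ^ (δ * (k:ℝ))) := mul_le_mul_of_nonneg_left hexp hB0
        _ ≤ B * (((p:ℝ) ^ δ) ^ k) := mul_le_mul_of_nonneg_left h2δ hB0
    · rw [if_neg hsmall, one_mul]
      push_neg at hsmall
      have h2 : (2:ℝ) ≤ (p:ℝ) ^ δ := by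
        have := Real.rpow_le_rpow (by positivity) hsmall hδ.le
        rwa [← Real.rpow_mul (by norm_num : (0:ℝ) ≤ 2), one_div_mul_cancel hδ.ne',
          Real.rpow_one] at this
      have hnk : ((k:ℝ) + 1) ≤ (2:ℝ) ^ k := by
        have := @Nat.lt_two_pow_self k
        have h' : k + 1 ≤ 2 ^ k := this
        exact_mod_cast h'
      calc ((k:ℝ) + 1) ≤ (2:ℝ) ^ k := hnk
        _ ≤ ((p:ℝ) ^ δ) ^ k := pow_le_pow_left₀ (by norm_num) h2 k
  have hprod :
      (↑(∏ p ∈ n.primeFactors, (n.factorization p + 1)) : ℝ) ≤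
        (∏ p ∈ n.primeFactors, (if (p:ℝ) < (2:ℝ) ^ (1/δ) then B else 1)) *
          ∏ p ∈ n.primeFactors, ((p : ℝ) ^ (n.factorization p)) ^ δ := by
    push_cast
    rw [← Finset.prod_mul_distrib]
    exact Finset.prod_le_prod (fun p _ => by positivity) key
  refine hprod.trans ?_
  have h1 : ∏ p ∈ n.primeFactors, ((p : ℝ) ^ (n.factorization p)) ^ δ = (n:ℝ) ^ δ := by
    rw [Real.finset_prod_rpow _ _ (fun p _ => by positivity)]
    congr 1
    have h := Nat.factorization_prod_pow_eq_self hn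
    rw [Finsupp.prod, Nat.support_factorization] at h
    exact_mod_cast congrArg (Nat.cast : ℕ → ℝ) h
  have h2 : (∏ p ∈ n.primeFactors, (if (p:ℝ) < (2:ℝ) ^ (1/δ) then B else 1)) ≤ B ^ (P+1) := by
    rw [Finset.prod_ite (fun _ => B) (fun _ => (1:ℝ)), Finset.prod_const,
      Finset.prod_const_one, mul_one]
    have hsub : (n.primeFactors.filter fun p : ℕ => (p:ℝ) < (2:ℝ) ^ (1/δ)) ⊆
        Finset.range (P+1) := by
      intro p hp
      rw [Finset.mem_filter] at hp
      rw [Finset.mem_range]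
      have hle : (2:ℝ) ^ (1/δ) ≤ (P:ℝ) := Nat.le_ceil _
      have : (p:ℝ) < (P:ℝ) := lt_of_lt_of_le hp.2 hle
      have : p < P := by exact_mod_cast this
      omega
    have hcard : (n.primeFactors.filter fun p : ℕ => (p:ℝ) < (2:ℝ) ^ (1/δ)).card ≤ P + 1 := by
      have := Finset.card_le_card hsub
      simpa using this
    exact pow_le_pow_right₀ hB1 hcard
  rw [h1]
  exact mul_le_mul_of_nonneg_right h2 (Real.rpow_nonneg (Nat.cast_nonneg n) δ)

/-- averaged Ramanujan bound for `A(n1, n2)` assuming the Hecke relation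
and the averaged Ramanujan bound for `A(1, n)`. -/
theorem stmt0 (A : ℕ → ℕ → ℂ)
    (hHecke : ∀ n1 n2 : ℕ, 0 < n1 → 0 < n2 →
      A n1 n2 = ∑ d ∈ (Nat.gcd n1 n2).divisors,
        ((moebius d : ℤ) : ℂ) * A (n1 / d) 1 * A 1 (n2 / d))
    (hRam : ∀ ε : ℝ, 0 < ε → ∃ C : ℝ, 0 < C ∧ ∀ X : ℕ, 1 ≤ X →
      ∑ n ∈ Finset.Icc 1 X, ‖A 1 n‖ ^ 2 ≤ C * (X : ℝ) ^ (1 + ε)) :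
    ∀ ε : ℝ, 0 < ε → ∃ C : ℝ, 0 < C ∧ ∀ N n1 : ℕ, 1 ≤ N → 1 ≤ n1 →
      ∑ n2 ∈ Finset.Icc 1 (N / n1 ^ 2), ‖A n1 n2‖ ^ 2 ≤
        C * ((N : ℝ) ^ (1 + ε) / (n1 : ℝ) ^ 2) *
          ∑ d ∈ n1.divisors, ‖A (n1 / d) 1‖ ^ 2 / (d : ℝ) := by
  intro ε hε
  obtain ⟨Cτ, hCτ1, hCτ⟩ := divisor_bound ε hε
  obtain ⟨CR, hCR0, hCR⟩ := hRam (ε/2) (by positivity)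
  have hCτ0 : (0:ℝ) < Cτ := lt_of_lt_of_le one_pos hCτ1
  refine ⟨Cτ * CR, by positivity, ?_⟩
  intro N n1 hN hn1
  have hn10 : n1 ≠ 0 := by omega
  have hn1pos : 0 < n1 := by omega
  have hn1R : (0:ℝ) < (n1:ℝ) := by exact_mod_cast hn1pos
  have hNR : (0:ℝ) < (N:ℝ) := by exact_mod_cast (by omega : 0 < N)
  set M := N / n1 ^ 2 with hMdef
  have hTnn : 0 ≤ ∑ d ∈ n1.divisors, ‖A (n1 / d) 1‖ ^ 2 / (d : ℝ) :=
    Finset.sum_nonneg fun d _ => by positivity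
  rcases Nat.eq_zero_or_pos M with hM0 | hMpos
  · rw [hM0]
    simp only [Finset.Icc_eq_empty_of_lt (by norm_num : (0:ℕ) < 1), Finset.sum_empty]
    have : (0:ℝ) ≤ Cτ * CR * ((N:ℝ) ^ (1+ε) / (n1:ℝ)^2) := by positivity
    exact mul_nonneg this hTnn
  · have hn12N : ((n1:ℝ))^2 ≤ (N:ℝ) := by
      have h : n1 ^ 2 ≤ N := (Nat.one_le_div_iff (by positivity)).mp hMpos
      exact_mod_cast h
    have hRam' : ∀ K : ℕ, ∑ m ∈ Finset.Icc 1 K, ‖A 1 m‖ ^ 2 ≤ CR * (K:ℝ) ^ (1 + ε/2) := by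
      intro K
      rcases Nat.eq_zero_or_pos K with h | h
      · subst h
        rw [show ((0:ℕ):ℝ) = (0:ℝ) by norm_num,
          Real.zero_rpow (by positivity : (1:ℝ) + ε/2 ≠ 0)]
        simp
      · exact hCR K h
    set τ : ℝ := (n1.divisors.card : ℝ) with hτdef
    have hτ0 : 0 ≤ τ := Nat.cast_nonneg _
    -- pointwise Cauchy-Schwarz bound
    have hpt : ∀ n2 ∈ Finset.Icc 1 M, ‖A n1 n2‖ ^ 2 ≤
        τ * ∑ d ∈ n1.divisors,
          (if d ∣ n2 then ‖A (n1/d) 1‖^2 * ‖A 1 (n2/d)‖^2 else 0) := by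
      intro n2 hn2
      rw [Finset.mem_Icc] at hn2
      have hn20 : 0 < n2 := hn2.1
      rw [hHecke n1 n2 hn1pos hn20]
      set D := (Nat.gcd n1 n2).divisors with hD
      have hDsub : D ⊆ n1.divisors :=
        Nat.divisors_subset_of_dvd hn10 (Nat.gcd_dvd_left _ _)
      have h1 : ‖∑ d ∈ D, ((moebius d : ℤ) : ℂ) * A (n1 / d) 1 * A 1 (n2 / d)‖
          ≤ ∑ d ∈ D, ‖A (n1/d) 1‖ * ‖A 1 (n2/d)‖ := by
        refine (norm_sum_le _ _).trans (Finset.sum_le_sum fun d _ => ?_)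
        rw [norm_mul, norm_mul]
        have hμ : ‖((moebius d : ℤ) : ℂ)‖ ≤ 1 := by
          rw [Complex.norm_intCast]
          exact_mod_cast abs_moebius_le_one
        have h2 := mul_le_mul_of_nonneg_right
          (mul_le_mul_of_nonneg_right hμ (norm_nonneg (A (n1/d) 1))) (norm_nonneg (A 1 (n2/d)))
        simpa using h2
      calc ‖∑ d ∈ D, ((moebius d : ℤ) : ℂ) * A (n1 / d) 1 * A 1 (n2 / d)‖ ^ 2
          ≤ (∑ d ∈ D, ‖A (n1/d) 1‖ * ‖A 1 (n2/d)‖) ^ 2 :=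
            pow_le_pow_left₀ (norm_nonneg _) h1 2
        _ ≤ (D.card : ℝ) * ∑ d ∈ D, (‖A (n1/d) 1‖ * ‖A 1 (n2/d)‖) ^ 2 :=
            sq_sum_le_card_mul_sum_sq
        _ ≤ τ * ∑ d ∈ n1.divisors,
              (if d ∣ n2 then ‖A (n1/d) 1‖^2 * ‖A 1 (n2/d)‖^2 else 0) := by
            have hc : (D.card : ℝ) ≤ τ := by
              rw [hτdef]
              exact_mod_cast Finset.card_le_card hDsub
            have heq : ∀ d ∈ D, (‖A (n1/d) 1‖ * ‖A 1 (n2/d)‖) ^ 2 =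
                (if d ∣ n2 then ‖A (n1/d) 1‖^2 * ‖A 1 (n2/d)‖^2 else 0) := by
              intro d hd
              have hdvd : d ∣ n2 :=
                ((Nat.mem_divisors.mp hd).1).trans (Nat.gcd_dvd_right _ _)
              rw [if_pos hdvd, mul_pow]
            rw [Finset.sum_congr rfl heq]
            have hsum : ∑ d ∈ D, (if d ∣ n2 then ‖A (n1/d) 1‖^2 * ‖A 1 (n2/d)‖^2 else 0)
                ≤ ∑ d ∈ n1.divisors, (if d ∣ n2 then ‖A (n1/d) 1‖^2 * ‖A 1 (n2/d)‖^2 else 0) :=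
              Finset.sum_le_sum_of_subset_of_nonneg hDsub
                (fun i _ _ => by split <;> positivity)
            have hsnn : 0 ≤ ∑ d ∈ D, (if d ∣ n2 then ‖A (n1/d) 1‖^2 * ‖A 1 (n2/d)‖^2 else 0) :=
              Finset.sum_nonneg fun i _ => by split <;> positivity
            exact mul_le_mul hc hsum hsnn hτ0
    -- inner rearrangement for each divisor d
    have hinner : ∀ d ∈ n1.divisors,
        ∑ n2 ∈ Finset.Icc 1 M, (if d ∣ n2 then ‖A (n1/d) 1‖^2 * ‖A 1 (n2/d)‖^2 else 0)
          = ‖A (n1/d) 1‖^2 * ∑ m ∈ Finset.Icc 1 (M / d), ‖A 1 m‖^2 := by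
      intro d hd
      have hd0 : 0 < d := Nat.pos_of_mem_divisors hd
      rw [← Finset.sum_filter, Finset.mul_sum]
      refine Finset.sum_nbij' (fun n2 => n2 / d) (fun m => d * m) ?_ ?_ ?_ ?_ ?_
      · intro a ha
        rw [Finset.mem_filter, Finset.mem_Icc] at ha
        obtain ⟨⟨h1a, h2a⟩, hdvd⟩ := ha
        rw [Finset.mem_Icc]
        constructor
        · exact (Nat.one_le_div_iff hd0).mpr (Nat.le_of_dvd (by omega) hdvd)
        · exact Nat.div_le_div_right h2a
      · intro m hm
        rw [Finset.mem_Icc] at hm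
        rw [Finset.mem_filter, Finset.mem_Icc]
        refine ⟨⟨?_, ?_⟩, ⟨m, rfl⟩⟩
        · exact Nat.mul_pos hd0 hm.1
        · have := (Nat.le_div_iff_mul_le hd0).mp hm.2
          calc d * m = m * d := by ring
          _ ≤ M := this
      · intro a ha
        rw [Finset.mem_filter] at ha
        exact Nat.mul_div_cancel' ha.2
      · intro m _
        exact Nat.mul_div_cancel_left m hd0
      · intro a _
        rfl
    -- scalar estimate for each divisor d
    have hscalar : ∀ d ∈ n1.divisors,
        τ * (CR * ((M / d : ℕ) : ℝ) ^ (1 + ε/2)) ≤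
          Cτ * CR * (N:ℝ) ^ (1 + ε) / ((n1:ℝ)^2 * (d:ℝ)) := by
      intro d hd
      have hd0 : 0 < d := Nat.pos_of_mem_divisors hd
      have hdR : (1:ℝ) ≤ (d:ℝ) := by exact_mod_cast hd0
      have hdR0 : (0:ℝ) < (d:ℝ) := by linarith
      have hn1R1 : (1:ℝ) ≤ (n1:ℝ) := by exact_mod_cast hn1
      have hden1 : (1:ℝ) ≤ (n1:ℝ)^2 * (d:ℝ) := by nlinarith [hn1R1, hdR]
      have hden0 : (0:ℝ) < (n1:ℝ)^2 * (d:ℝ) := by positivity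
      have hle : ((M / d : ℕ) : ℝ) ≤ (N:ℝ) / ((n1:ℝ)^2 * (d:ℝ)) := by
        have h1 : M / d = N / (n1^2 * d) := by rw [hMdef, Nat.div_div_eq_div_mul]
        rw [h1]
        calc ((N / (n1^2 * d) : ℕ) : ℝ) ≤ (N:ℝ) / ((n1^2 * d : ℕ) : ℝ) := Nat.cast_div_le
        _ = (N:ℝ) / ((n1:ℝ)^2 * (d:ℝ)) := by push_cast; ring
      have hrp : ((M / d : ℕ) : ℝ) ^ (1 + ε/2) ≤
          ((N:ℝ) / ((n1:ℝ)^2 * (d:ℝ))) ^ (1 + ε/2) :=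
        Real.rpow_le_rpow (Nat.cast_nonneg _) hle (by positivity)
      have h5 : ((N:ℝ) / ((n1:ℝ)^2 * (d:ℝ))) ^ (1 + ε/2)
          = (N:ℝ) ^ (1 + ε/2) / ((n1:ℝ)^2 * (d:ℝ)) ^ (1 + ε/2) :=
        Real.div_rpow hNR.le hden0.le _
      have h6 : (n1:ℝ)^2 * (d:ℝ) ≤ ((n1:ℝ)^2 * (d:ℝ)) ^ (1 + ε/2) := by
        nth_rewrite 1 [← Real.rpow_one ((n1:ℝ)^2 * (d:ℝ))]
        exact Real.rpow_le_rpow_of_exponent_le hden1 (by linarith)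
      have h7 : (N:ℝ) ^ (1 + ε/2) / ((n1:ℝ)^2 * (d:ℝ)) ^ (1 + ε/2)
          ≤ (N:ℝ) ^ (1 + ε/2) / ((n1:ℝ)^2 * (d:ℝ)) := by
        gcongr
      have h8 : τ ≤ Cτ * (n1:ℝ) ^ ε := hCτ n1 hn10
      have h9 : (n1:ℝ) ^ ε ≤ (N:ℝ) ^ (ε/2) := by
        have heq : (n1:ℝ) ^ ε = ((n1:ℝ)^2) ^ (ε/2) := by
          rw [← Real.rpow_natCast (n1:ℝ) 2, ← Real.rpow_mul hn1R.le]
          congr 1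
          push_cast
          ring
        rw [heq]
        exact Real.rpow_le_rpow (by positivity) hn12N (by positivity)
      have h10 : (N:ℝ) ^ (ε/2) * (N:ℝ) ^ (1 + ε/2) = (N:ℝ) ^ (1 + ε) := by
        rw [← Real.rpow_add hNR]; ring_nf
      calc τ * (CR * ((M / d : ℕ) : ℝ) ^ (1 + ε/2))
          ≤ (Cτ * (n1:ℝ) ^ ε) * (CR * ((N:ℝ) ^ (1 + ε/2) / ((n1:ℝ)^2 * (d:ℝ)))) := by
            refine mul_le_mul h8 ?_ (by positivity) (by positivity)
            refine mul_le_mul_of_nonneg_left ?_ hCR0.le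
            exact hrp.trans (h5 ▸ h7)
        _ = Cτ * CR * ((n1:ℝ) ^ ε * (N:ℝ) ^ (1 + ε/2)) / ((n1:ℝ)^2 * (d:ℝ)) := by ring
        _ ≤ Cτ * CR * ((N:ℝ) ^ (ε/2) * (N:ℝ) ^ (1 + ε/2)) / ((n1:ℝ)^2 * (d:ℝ)) := by
            gcongr
        _ = Cτ * CR * (N:ℝ) ^ (1 + ε) / ((n1:ℝ)^2 * (d:ℝ)) := by rw [h10]
    -- assemble
    calc ∑ n2 ∈ Finset.Icc 1 M, ‖A n1 n2‖ ^ 2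
        ≤ ∑ n2 ∈ Finset.Icc 1 M, τ * ∑ d ∈ n1.divisors,
            (if d ∣ n2 then ‖A (n1/d) 1‖^2 * ‖A 1 (n2/d)‖^2 else 0) :=
          Finset.sum_le_sum hpt
      _ = τ * ∑ d ∈ n1.divisors, ∑ n2 ∈ Finset.Icc 1 M,
            (if d ∣ n2 then ‖A (n1/d) 1‖^2 * ‖A 1 (n2/d)‖^2 else 0) := by
          rw [← Finset.mul_sum]
          congr 1
          exact Finset.sum_comm
      _ = τ * ∑ d ∈ n1.divisors, ‖A (n1/d) 1‖^2 * ∑ m ∈ Finset.Icc 1 (M / d), ‖A 1 m‖^2 := by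
          congr 1
          exact Finset.sum_congr rfl hinner
      _ ≤ τ * ∑ d ∈ n1.divisors, ‖A (n1/d) 1‖^2 * (CR * ((M / d : ℕ) : ℝ) ^ (1 + ε/2)) := by
          refine mul_le_mul_of_nonneg_left (Finset.sum_le_sum fun d _ => ?_) hτ0
          exact mul_le_mul_of_nonneg_left (hRam' (M / d)) (by positivity)
      _ ≤ Cτ * CR * ((N : ℝ) ^ (1 + ε) / (n1 : ℝ) ^ 2) *
            ∑ d ∈ n1.divisors, ‖A (n1 / d) 1‖ ^ 2 / (d : ℝ) := by
          rw [Finset.mul_sum, Finset.mul_sum]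
          refine Finset.sum_le_sum fun d hd => ?_
          have hd0 : 0 < d := Nat.pos_of_mem_divisors hd
          have hdR0 : (0:ℝ) < (d:ℝ) := by exact_mod_cast hd0
          have hs := hscalar d hd
          calc τ * (‖A (n1/d) 1‖^2 * (CR * ((M / d : ℕ) : ℝ) ^ (1 + ε/2)))
              = ‖A (n1/d) 1‖^2 * (τ * (CR * ((M / d : ℕ) : ℝ) ^ (1 + ε/2))) := by ring
            _ ≤ ‖A (n1/d) 1‖^2 * (Cτ * CR * (N:ℝ) ^ (1 + ε) / ((n1:ℝ)^2 * (d:ℝ))) :=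
                mul_le_mul_of_nonneg_left hs (by positivity)
            _ = Cτ * CR * ((N : ℝ) ^ (1 + ε) / (n1 : ℝ) ^ 2) * (‖A (n1 / d) 1‖ ^ 2 / (d:ℝ)) := by
                field_simp
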